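/- Let m, n ∈ ℕ and let s_{j,ℓ} ∈ ℂ with Re(s_{j,ℓ}) > 0 for all 1 ≤ j ≤ n, 1 ≤ ℓ ≤ m, and assume s_{j,ℓ} + conj(s_{k,ℓ}) ≠ 1 for all j, k, ℓ. Then the n×n complex matrix whose (j,k) entry is ∏_{ℓ=1}^{m} ( 1/(s_{j,ℓ} + conj(s_{k,ℓ}) − 1) − ζ(s_{j,ℓ} + conj(s_{k,ℓ}))/(s_{j,ℓ} + conj(s_{k,ℓ})) ) is positive semidefinite, where ζ is the Riemann zeta function. -/

import Mathlib

open Complex ComplexOrder MeasureTheory Set Filter Topology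

noncomputable def zkf (w : ℂ) (x : ℝ) : ℂ := ((Int.fract x : ℝ) : ℂ) * (x : ℂ) ^ (-w - 1)

lemma cpow_aesm (w : ℂ) : AEStronglyMeasurable (fun x : ℝ => (x:ℂ) ^ w)
    (volume.restrict (Ioi (1:ℝ))) :=
  (ContinuousOn.aestronglyMeasurable (fun x hx =>
    (Complex.continuousAt_ofReal_cpow_const _ _
      (Or.inr (ne_of_gt (lt_trans one_pos hx)))).continuousWithinAt) measurableSet_Ioi)

lemma zkf_integrable {w : ℂ} (hw : 0 < w.re) :
    IntegrableOn (zkf w) (Ioi (1:ℝ)) := by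
  refine Integrable.mono' (g := fun x => x ^ (-w.re - 1))
    (integrableOn_Ioi_rpow_of_lt (by linarith) one_pos) ?_ ?_
  · exact ((Complex.measurable_ofReal.comp measurable_fract).aestronglyMeasurable).mul
      (cpow_aesm (-w-1))
  · filter_upwards [self_mem_ae_restrict measurableSet_Ioi] with x hx
    have hx0 : (0:ℝ) < x := lt_trans one_pos hx
    rw [zkf, norm_mul, Complex.norm_real, Real.norm_eq_abs,
      Complex.norm_cpow_eq_rpow_re_of_pos hx0]
    have h1 : |Int.fract x| ≤ 1 := by
      rw [_root_.abs_of_nonneg (Int.fract_nonneg x)]; exact (Int.fract_lt_one x).le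
    calc |Int.fract x| * x ^ ((-w-1).re) ≤ 1 * x ^ ((-w-1).re) :=
          mul_le_mul_of_nonneg_right h1 (Real.rpow_nonneg hx0.le _)
      _ = x ^ (-w.re - 1) := by
          rw [one_mul, show (-w-1).re = -w.re - 1 by simp]

lemma floor_integrable {w : ℂ} (hw : 1 < w.re) :
    IntegrableOn (fun x : ℝ => ((⌊x⌋ : ℝ) : ℂ) * (x:ℂ) ^ (-w - 1)) (Ioi (1:ℝ)) := by
  refine Integrable.mono' (g := fun x => x ^ (-w.re))
    (integrableOn_Ioi_rpow_of_lt (by linarith) one_pos) ?_ ?_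
  · exact ((Complex.measurable_ofReal.comp
      (measurable_from_top.comp Int.measurable_floor)).aestronglyMeasurable).mul (cpow_aesm (-w-1))
  · filter_upwards [self_mem_ae_restrict measurableSet_Ioi] with x hx
    have hx0 : (0:ℝ) < x := lt_trans one_pos hx
    have h1 : |(⌊x⌋:ℝ)| ≤ x := by
      rw [_root_.abs_of_nonneg (by exact_mod_cast Int.floor_nonneg.2 hx0.le)]
      exact Int.floor_le x
    rw [norm_mul, Complex.norm_real, Real.norm_eq_abs,
      Complex.norm_cpow_eq_rpow_re_of_pos hx0,
      show (-w-1).re = -w.re - 1 by simp]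
    calc |(⌊x⌋:ℝ)| * x ^ (-w.re - 1) ≤ x * x ^ (-w.re - 1) :=
          mul_le_mul_of_nonneg_right h1 (Real.rpow_nonneg hx0.le _)
      _ = x ^ (-w.re) := by
          rw [← Real.rpow_one_add' hx0.le (by intro h; simp at h; linarith)]
          norm_num

lemma Ioi_eq_iUnion_Ioc : Ioi (1:ℝ) = ⋃ n : ℕ, Ioc ((n:ℝ)+1) ((n:ℝ)+2) := by
  ext x
  simp only [mem_Ioi, mem_iUnion, mem_Ioc]
  constructor
  · intro hx
    have h2 : 2 ≤ ⌈x⌉ := by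
      have : (1:ℤ) < ⌈x⌉ := Int.lt_ceil.2 (by exact_mod_cast hx)
      omega
    refine ⟨(⌈x⌉ - 2).toNat, ?_, ?_⟩
    · have hz : (((⌈x⌉ - 2).toNat : ℤ)) = ⌈x⌉ - 2 := Int.toNat_of_nonneg (by omega)
      have hn : (((⌈x⌉ - 2).toNat : ℕ) : ℝ) = (⌈x⌉:ℝ) - 2 := by
        exact_mod_cast congrArg (Int.cast : ℤ → ℝ) hz
      rw [hn]
      have := Int.ceil_lt_add_one x
      linarith
    · have hz : (((⌈x⌉ - 2).toNat : ℤ)) = ⌈x⌉ - 2 := Int.toNat_of_nonneg (by omega)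
      have hn : (((⌈x⌉ - 2).toNat : ℕ) : ℝ) = (⌈x⌉:ℝ) - 2 := by
        exact_mod_cast congrArg (Int.cast : ℤ → ℝ) hz
      rw [hn]
      have := Int.le_ceil x
      linarith
  · rintro ⟨n, h1, -⟩
    have : (0:ℝ) ≤ (n:ℝ) := n.cast_nonneg
    linarith

lemma Ioc_pairwise_disjoint :
    Pairwise (Function.onFun Disjoint fun n : ℕ => Ioc ((n:ℝ)+1) ((n:ℝ)+2)) := by
  intro i j hij
  rcases hij.lt_or_gt with h | h
  · have h' : (i:ℝ) + 1 ≤ (j:ℝ) := by exact_mod_cast Nat.succ_le_of_lt h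
    exact Set.Ioc_disjoint_Ioc.2
      (min_le_iff.2 (Or.inl (le_max_iff.2 (Or.inr (by linarith)))))
  · have h' : (j:ℝ) + 1 ≤ (i:ℝ) := by exact_mod_cast Nat.succ_le_of_lt h
    exact Set.Ioc_disjoint_Ioc.2
      (min_le_iff.2 (Or.inr (le_max_iff.2 (Or.inl (by linarith)))))

lemma piece_eval {w : ℂ} (hw0 : w ≠ 0) (n : ℕ) :
    ∫ x in Ioc ((n:ℝ)+1) ((n:ℝ)+2), ((⌊x⌋:ℝ):ℂ) * (x:ℂ) ^ (-w-1)
      = (((n:ℂ)+1) * (((n:ℂ)+1) ^ (-w) - ((n:ℂ)+2) ^ (-w))) / w := by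
  rw [integral_Ioc_eq_integral_Ioo]
  have hcongr : ∀ x ∈ Ioo ((n:ℝ)+1) ((n:ℝ)+2),
      ((⌊x⌋:ℝ):ℂ) * (x:ℂ) ^ (-w-1) = ((n:ℂ)+1) * (x:ℂ) ^ (-w-1) := by
    intro x hx
    have : ⌊x⌋ = (n:ℤ) + 1 := by
      rw [Int.floor_eq_iff]
      constructor
      · push_cast; exact hx.1.le
      · push_cast; linarith [hx.2]
    rw [this]; push_cast; ring
  rw [setIntegral_congr_fun measurableSet_Ioo hcongr]
  have hIoo : ∫ x in Ioo ((n:ℝ)+1) ((n:ℝ)+2), ((n:ℂ)+1) * (x:ℂ) ^ (-w-1)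
      = ((n:ℂ)+1) * ∫ x in Ioo ((n:ℝ)+1) ((n:ℝ)+2), (x:ℂ) ^ (-w-1) := integral_const_mul _ _
  rw [hIoo, ← integral_Ioc_eq_integral_Ioo,
    ← intervalIntegral.integral_of_le (by linarith : ((n:ℝ)+1) ≤ (n:ℝ)+2)]
  have hr : -w - 1 ≠ -1 := by
    intro h; exact hw0 (by linear_combination -h)
  have h0 : (0:ℝ) ∉ Set.uIcc ((n:ℝ)+1) ((n:ℝ)+2) := by
    rw [Set.uIcc_of_le (by linarith : ((n:ℝ)+1) ≤ (n:ℝ)+2)]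
    intro h
    have := h.1
    have : (0:ℝ) ≤ (n:ℝ) := n.cast_nonneg
    linarith [(Set.mem_Icc.1 h).1]
  rw [integral_cpow (Or.inr ⟨hr, h0⟩)]
  have hw1 : -w - 1 + 1 = -w := by ring
  rw [hw1]
  have hc1 : (((n:ℝ)+1 : ℝ) : ℂ) = (n:ℂ)+1 := by push_cast; ring
  have hc2 : (((n:ℝ)+2 : ℝ) : ℂ) = (n:ℂ)+2 := by push_cast; ring
  rw [hc1, hc2, div_neg, ← neg_div, neg_sub, mul_div_assoc]

lemma cpow_nat_tendsto_zero {w : ℂ} (hw : 1 < w.re) :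
    Tendsto (fun N : ℕ => ((N:ℂ)+1) ^ ((1:ℂ)-w)) atTop (𝓝 0) := by
  rw [tendsto_zero_iff_norm_tendsto_zero]
  have hnorm : ∀ N : ℕ, ‖((N:ℂ)+1) ^ ((1:ℂ)-w)‖ = ((N:ℝ)+1) ^ ((1:ℝ)-w.re) := by
    intro N
    have hb : ((N:ℂ)+1) = (((N:ℝ)+1 : ℝ) : ℂ) := by push_cast; ring
    rw [hb, Complex.norm_cpow_eq_rpow_re_of_pos (by positivity)]
    congr 1
  simp only [hnorm]
  have h1 : Tendsto (fun N : ℕ => ((N:ℝ)+1)) atTop atTop :=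
    tendsto_atTop_add_const_right _ 1 tendsto_natCast_atTop_atTop
  have h2 : Tendsto (fun x : ℝ => x ^ ((1:ℝ)-w.re)) atTop (𝓝 0) := by
    have := tendsto_rpow_neg_atTop (by linarith : (0:ℝ) < w.re - 1)
    simpa [show -(w.re-1) = 1 - w.re by ring] using this
  exact h2.comp h1

lemma partial_sum_eq {w : ℂ} (N : ℕ) :
    ∑ n ∈ Finset.range N, (((n:ℂ)+1) * (((n:ℂ)+1) ^ (-w) - ((n:ℂ)+2) ^ (-w)))
      = 1 - ((N:ℂ)+1) ^ ((1:ℂ)-w) + ∑ n ∈ Finset.range N, ((n:ℂ)+2) ^ (-w) := by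
  induction N with
  | zero => simp
  | succ N ih =>
      rw [Finset.sum_range_succ, ih, Finset.sum_range_succ]
      have hz1 : ((N:ℂ)+1) ≠ 0 := Nat.cast_add_one_ne_zero N
      have hz2 : ((N:ℂ)+2) ≠ 0 := by
        intro h
        have := congrArg Complex.re h
        simp [Complex.add_re, Complex.natCast_re] at this
        linarith [Nat.cast_nonneg (α := ℝ) N]
      have e1 : ((N:ℂ)+1) ^ ((1:ℂ)-w) = ((N:ℂ)+1) * ((N:ℂ)+1) ^ (-w) := by
        rw [show (1:ℂ)-w = 1 + (-w) by ring, Complex.cpow_add _ _ hz1, Complex.cpow_one]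
      have e2 : (((N+1:ℕ):ℂ)+1) ^ ((1:ℂ)-w) = ((N:ℂ)+2) * ((N:ℂ)+2) ^ (-w) := by
    
        rw [show (((N+1:ℕ):ℂ)+1) = ((N:ℂ)+2) by push_cast; ring,
          show (1:ℂ)-w = 1 + (-w) by ring, Complex.cpow_add _ _ hz2, Complex.cpow_one]
      rw [e2, e1]
      push_cast
      ring

lemma hasSum_shifted {w : ℂ} (hw : 1 < w.re) :
    HasSum (fun n : ℕ => ((n:ℂ)+1) ^ (-w)) (riemannZeta w) := by
  have hS0 : Summable (fun n : ℕ => 1/(n:ℂ) ^ w) := Complex.summable_one_div_nat_cpow.2 hw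
  have hS : Summable (fun n : ℕ => ((n:ℂ)+1) ^ (-w)) := by
    have := hS0.comp_injective Nat.succ_injective
    refine this.congr fun n => ?_
    simp only [Function.comp]
    rw [Complex.cpow_neg, one_div]
    push_cast
    ring_nf
  have := hS.hasSum
  rwa [show ∑' n : ℕ, ((n:ℂ)+1) ^ (-w) = riemannZeta w from by
    rw [zeta_eq_tsum_one_div_nat_add_one_cpow hw]
    exact tsum_congr fun n => by rw [Complex.cpow_neg, one_div]] at this

lemma tendsto_partial_sums {w : ℂ} (hw : 1 < w.re) :
    Tendsto (fun N => ∑ n ∈ Finset.range N,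
        (((n:ℂ)+1) * (((n:ℂ)+1) ^ (-w) - ((n:ℂ)+2) ^ (-w)))) atTop (𝓝 (riemannZeta w)) := by
  simp only [partial_sum_eq]
  have h2 : HasSum (fun n : ℕ => (((n+1:ℕ):ℂ)+1) ^ (-w)) (riemannZeta w - 1) := by
    refine (hasSum_nat_add_iff (f := fun n : ℕ => ((n:ℂ)+1) ^ (-w)) 1).2 ?_
    have : riemannZeta w - 1 + ∑ i ∈ Finset.range 1, ((i:ℂ)+1) ^ (-w) = riemannZeta w := by
      simp
    rw [this]
    exact hasSum_shifted hw
  have h2' : Tendsto (fun N => ∑ n ∈ Finset.range N, ((n:ℂ)+2) ^ (-w)) atTop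
      (𝓝 (riemannZeta w - 1)) := by
    have := h2.tendsto_sum_nat
    refine this.congr fun N => Finset.sum_congr rfl fun n _ => ?_
    push_cast
    ring_nf
  have hfull := ((tendsto_const_nhds (x := (1:ℂ))).sub (cpow_nat_tendsto_zero hw)).add h2'
  simpa using hfull

lemma floor_integral_eq {w : ℂ} (hw : 1 < w.re) :
    ∫ x in Ioi (1:ℝ), ((⌊x⌋:ℝ):ℂ) * (x:ℂ) ^ (-w-1) = riemannZeta w / w := by
  have hw0 : w ≠ 0 := by
    intro h; rw [h] at hw; simp at hw; linarith
  have hHS : HasSum (fun n : ℕ => (((n:ℂ)+1) * (((n:ℂ)+1) ^ (-w) - ((n:ℂ)+2) ^ (-w))) / w)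
      (∫ x in Ioi (1:ℝ), ((⌊x⌋:ℝ):ℂ) * (x:ℂ) ^ (-w-1)) := by
    have h := MeasureTheory.hasSum_integral_iUnion
      (f := fun x : ℝ => ((⌊x⌋:ℝ):ℂ) * (x:ℂ) ^ (-w-1))
      (s := fun n : ℕ => Ioc ((n:ℝ)+1) ((n:ℝ)+2))
      (fun _ => measurableSet_Ioc) Ioc_pairwise_disjoint
      (by rw [← Ioi_eq_iUnion_Ioc]; exact floor_integrable hw)
    rw [← Ioi_eq_iUnion_Ioc] at h
    simp only [piece_eval hw0] at h
    exact h
  have hT2 : Tendsto (fun N => ∑ n ∈ Finset.range N,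
      (((n:ℂ)+1) * (((n:ℂ)+1) ^ (-w) - ((n:ℂ)+2) ^ (-w))) / w) atTop
      (𝓝 (riemannZeta w / w)) := by
    have := (tendsto_partial_sums hw).div_const w
    simpa only [Finset.sum_div] using this
  exact tendsto_nhds_unique hHS.tendsto_sum_nat hT2

lemma id_integral_eq {w : ℂ} (hw : 1 < w.re) :
    ∫ x in Ioi (1:ℝ), ((x:ℝ):ℂ) * (x:ℂ) ^ (-w-1) = 1/(w-1) := by
  have hcongr : ∀ x ∈ Ioi (1:ℝ), ((x:ℝ):ℂ) * (x:ℂ) ^ (-w-1) = (x:ℂ) ^ (-w) := by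
    intro x hx
    have hxne : (x:ℂ) ≠ 0 := Complex.ofReal_ne_zero.2 (by rw [mem_Ioi] at hx; linarith)
    rw [show -w = (-w-1)+1 by ring, Complex.cpow_add _ _ hxne, Complex.cpow_one]
    ring
  rw [setIntegral_congr_fun measurableSet_Ioi hcongr,
    integral_Ioi_cpow_of_lt (by simp; linarith) one_pos]
  have h1 : ((1:ℝ):ℂ) = 1 := by norm_num
  rw [h1, Complex.one_cpow]
  have h2 : -w + 1 ≠ 0 := by
    intro h
    have := congrArg Complex.re h
    simp at this
    linarith
  have h3 : w - 1 ≠ 0 := by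
    intro h
    have := congrArg Complex.re h
    simp at this
    linarith
  rw [div_eq_div_iff h2 h3]
  ring

lemma id_integrable {w : ℂ} (hw : 1 < w.re) :
    IntegrableOn (fun x : ℝ => ((x:ℝ):ℂ) * (x:ℂ) ^ (-w-1)) (Ioi (1:ℝ)) := by
  refine (integrableOn_Ioi_cpow_of_lt (a := -w) (by simp; linarith) one_pos).congr_fun
    (fun x hx => ?_) measurableSet_Ioi
  have hxne : (x:ℂ) ≠ 0 := Complex.ofReal_ne_zero.2 (by rw [mem_Ioi] at hx; linarith)
  show (x:ℂ) ^ (-w) = (x:ℂ) * (x:ℂ) ^ (-w-1)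
  conv_lhs => rw [show -w = (-w-1)+1 by ring, Complex.cpow_add _ _ hxne, Complex.cpow_one]
  ring

lemma zeta_key_gt_one {w : ℂ} (hw : 1 < w.re) :
    1 / (w - 1) - riemannZeta w / w = ∫ x in Ioi (1:ℝ), zkf w x := by
  have hsub : ∫ x in Ioi (1:ℝ), zkf w x
      = (∫ x in Ioi (1:ℝ), ((x:ℝ):ℂ) * (x:ℂ) ^ (-w-1))
        - ∫ x in Ioi (1:ℝ), ((⌊x⌋:ℝ):ℂ) * (x:ℂ) ^ (-w-1) := by
    rw [← integral_sub (id_integrable hw) (floor_integrable hw)]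
    refine setIntegral_congr_fun measurableSet_Ioi fun x _ => ?_
    rw [zkf, Int.fract]
    push_cast
    ring
  rw [hsub, id_integral_eq hw, floor_integral_eq hw]

noncomputable def zk (w : ℂ) : ℂ := ∫ x in Ioi (1:ℝ), zkf w x

lemma log_le_rpow_div {x : ℝ} (hx : 1 ≤ x) {c : ℝ} (hc : 0 < c) :
    Real.log x ≤ x ^ c / c := by
  have hx0 : (0:ℝ) < x := by linarith
  have h := Real.log_le_sub_one_of_pos (x := x ^ c) (by positivity)
  rw [Real.log_rpow hx0] at h
  rw [le_div_iff₀ hc, mul_comm]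
  nlinarith

lemma zkf_aesm (w : ℂ) : AEStronglyMeasurable (zkf w) (volume.restrict (Ioi (1:ℝ))) :=
  ((Complex.measurable_ofReal.comp measurable_fract).aestronglyMeasurable).mul (cpow_aesm (-w-1))

lemma zk_hasDerivAt {w₀ : ℂ} (hw : 0 < w₀.re) :
    HasDerivAt zk (∫ x in Ioi (1:ℝ),
      ((Int.fract x : ℝ) : ℂ) * ((x:ℂ) ^ (-w₀-1) * Complex.log x * (-1))) w₀ := by
  set σ := w₀.re with hσ
  have h := hasDerivAt_integral_of_dominated_loc_of_deriv_le
    (μ := volume.restrict (Ioi (1:ℝ)))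
    (F := fun w x => zkf w x)
    (F' := fun w x => ((Int.fract x : ℝ) : ℂ) * ((x:ℂ) ^ (-w-1) * Complex.log x * (-1)))
    (x₀ := w₀) (bound := fun x => (4/σ) * x ^ (-σ/4 - 1)) (s := Metric.ball w₀ (σ/2))
    (Metric.ball_mem_nhds _ (by positivity))
    (Eventually.of_forall fun w => zkf_aesm w)
    (zkf_integrable hw)
    ?_ ?_ ?_ ?_
  · exact h.2
  · -- measurability of F' w₀
    refine (((Complex.measurable_ofReal.comp measurable_fract).aestronglyMeasurable).mul
      (((cpow_aesm (-w₀-1)).mul ?_).mul aestronglyMeasurable_const))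
    refine ((Complex.measurable_ofReal.comp Real.measurable_log).aestronglyMeasurable).congr ?_
    filter_upwards [self_mem_ae_restrict measurableSet_Ioi] with x hx
    exact Complex.ofReal_log (by rw [mem_Ioi] at hx; linarith)
  · -- bound
    filter_upwards [self_mem_ae_restrict measurableSet_Ioi] with x hx
    intro w hwball
    rw [mem_Ioi] at hx
    have hx0 : (0:ℝ) < x := by linarith
    have hre : σ/2 ≤ w.re := by
      have : |(w - w₀).re| ≤ ‖w - w₀‖ := Complex.abs_re_le_norm _
      rw [Metric.mem_ball, Complex.dist_eq] at hwball
      have := abs_le.1 this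
      simp only [Complex.sub_re] at this
      linarith [this.1, hwball]
    have hlog : Complex.log (x:ℂ) = ((Real.log x : ℝ) : ℂ) :=
      (Complex.ofReal_log hx0.le).symm
    rw [norm_mul, norm_mul, norm_mul, hlog, norm_neg, norm_one, mul_one,
      Complex.norm_real, Complex.norm_real, Real.norm_eq_abs, Real.norm_eq_abs,
      Complex.norm_cpow_eq_rpow_re_of_pos hx0,
      show (-w-1).re = -w.re - 1 by simp]
    have h1 : |Int.fract x| ≤ 1 := by
      rw [_root_.abs_of_nonneg (Int.fract_nonneg x)]; exact (Int.fract_lt_one x).le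
    have h2 : x ^ (-w.re - 1) ≤ x ^ (-σ/2 - 1) :=
      Real.rpow_le_rpow_of_exponent_le (by linarith) (by linarith)
    have h3 : |Real.log x| ≤ x ^ (σ/4) / (σ/4) := by
      rw [_root_.abs_of_nonneg (Real.log_nonneg (by linarith))]
      exact log_le_rpow_div (by linarith) (by positivity)
    calc |Int.fract x| * (x ^ (-w.re - 1) * |Real.log x|)
        ≤ 1 * (x ^ (-σ/2 - 1) * (x ^ (σ/4) / (σ/4))) := by
          refine mul_le_mul h1 ?_ (by positivity) zero_le_one
          refine mul_le_mul h2 h3 (abs_nonneg _) (by positivity)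
      _ = (4/σ) * x ^ (-σ/4 - 1) := by
          rw [one_mul, mul_div_assoc', ← Real.rpow_add hx0,
            show -σ/2 - 1 + σ/4 = -σ/4 - 1 by ring, div_eq_inv_mul, inv_div]
  · exact (integrableOn_Ioi_rpow_of_lt (by linarith) one_pos).const_mul _
  · -- differentiability pointwise
    filter_upwards [self_mem_ae_restrict measurableSet_Ioi] with x hx
    intro w hwball
    rw [mem_Ioi] at hx
    have hxne : (x:ℂ) ≠ 0 := Complex.ofReal_ne_zero.2 (by linarith)
    have hbase : HasDerivAt (fun w : ℂ => -w - 1) (-1) w := by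
      simpa using ((hasDerivAt_id w).neg.sub_const 1)
    have := (hbase.const_cpow (c := (x:ℂ)) (Or.inl hxne)).const_mul
      (((Int.fract x : ℝ)) : ℂ)
    simpa [zkf, mul_assoc] using this

lemma zk_differentiableOn : DifferentiableOn ℂ zk {w : ℂ | 0 < w.re} :=
  fun _ hw => ((zk_hasDerivAt hw).differentiableAt).differentiableWithinAt

lemma U_preconnected : IsPreconnected ({z : ℂ | 0 < z.re} ∩ {(1:ℂ)}ᶜ) := by
  set C1 : Set ℂ := {z | 0 < z.re} ∩ {z | 0 < z.im} with hC1d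
  set C2 : Set ℂ := {z | 0 < z.re} ∩ {z | z.im < 0} with hC2d
  set C3 : Set ℂ := {z | 1 < z.re} with hC3d
  set C4 : Set ℂ := {z | 0 < z.re} ∩ {z | z.re < 1} with hC4d
  have hc1 : IsPreconnected C1 :=
    ((convex_halfSpace_re_gt 0).inter (convex_halfSpace_im_gt 0)).isPreconnected
  have hc2 : IsPreconnected C2 :=
    ((convex_halfSpace_re_gt 0).inter (convex_halfSpace_im_lt 0)).isPreconnected
  have hc3 : IsPreconnected C3 := (convex_halfSpace_re_gt 1).isPreconnected
  have hc4 : IsPreconnected C4 :=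
    ((convex_halfSpace_re_gt 0).inter (convex_halfSpace_re_lt 1)).isPreconnected
  have hP1 : IsPreconnected (C1 ∪ C3) := by
    refine IsPreconnected.union (2 + Complex.I) ?_ ?_ hc1 hc3
    · constructor <;> simp
    · simp [hC3d]
  have hP2 : IsPreconnected ((C1 ∪ C3) ∪ C4) := by
    refine IsPreconnected.union ((1/2 : ℝ) + Complex.I) (mem_union_left _ ?_) ?_ hP1 hc4
    · constructor <;> norm_num
    · constructor <;> norm_num
  have hP3 : IsPreconnected (((C1 ∪ C3) ∪ C4) ∪ C2) := by
    refine IsPreconnected.union (2 - Complex.I)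
      (mem_union_left _ (mem_union_right _ ?_)) ?_ hP2 hc2
    · show (1:ℝ) < (2 - Complex.I).re
      norm_num
    · constructor <;> norm_num
  have hEq : {z : ℂ | 0 < z.re} ∩ {(1:ℂ)}ᶜ = ((C1 ∪ C3) ∪ C4) ∪ C2 := by
    ext z
    constructor
    · rintro ⟨hre, hne⟩
      rcases lt_trichotomy z.im 0 with him | him | him
      · exact Or.inr ⟨hre, him⟩
      · rcases lt_trichotomy z.re 1 with h1 | h1 | h1
        · exact Or.inl (Or.inr ⟨hre, h1⟩)
        · exfalso
          refine hne (by rw [mem_singleton_iff]; exact Complex.ext (by simp [h1]) (by simp [him]))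
        · exact Or.inl (Or.inl (Or.inr h1))
      · exact Or.inl (Or.inl (Or.inl ⟨hre, him⟩))
    · rintro (((⟨hre, him⟩ | h1) | ⟨hre, h1⟩) | ⟨hre, him⟩)
      · refine ⟨hre, fun h => ?_⟩
        rw [mem_singleton_iff] at h
        rw [mem_setOf_eq, h] at him
        simp at him
      · have h1' : 1 < z.re := h1
        refine ⟨by rw [mem_setOf_eq]; linarith, fun h => ?_⟩
        rw [mem_singleton_iff] at h
        rw [h] at h1'
        simp at h1'
      · refine ⟨hre, fun h => ?_⟩
        rw [mem_singleton_iff] at h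
        rw [mem_setOf_eq, h] at h1
        simp at h1
      · refine ⟨hre, fun h => ?_⟩
        rw [mem_singleton_iff] at h
        rw [mem_setOf_eq, h] at him
        simp at him
  rw [hEq]
  exact hP3

lemma zeta_key {w : ℂ} (hw : 0 < w.re) (hw1 : w ≠ 1) :
    1 / (w - 1) - riemannZeta w / w = ∫ x in Ioi (1:ℝ), zkf w x := by
  set U : Set ℂ := {z | 0 < z.re} ∩ {(1:ℂ)}ᶜ with hU
  have hUopen : IsOpen U :=
    (isOpen_lt continuous_const Complex.continuous_re).inter isOpen_compl_singleton
  set g : ℂ → ℂ := fun z => 1 / (z - 1) - riemannZeta z / z with hgdef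
  have hg : DifferentiableOn ℂ g U := by
    intro z hz
    have hz1 : z ≠ 1 := hz.2
    have hz0 : z ≠ 0 := by
      intro h
      have := hz.1
      rw [h] at this
      simp at this
    apply DifferentiableAt.differentiableWithinAt
    apply DifferentiableAt.sub
    · exact (differentiableAt_const 1).div
        (differentiableAt_id.sub (differentiableAt_const 1)) (sub_ne_zero.2 hz1)
    · exact (differentiableAt_riemannZeta hz1).div differentiableAt_id hz0
  have hzk : DifferentiableOn ℂ zk U := zk_differentiableOn.mono inter_subset_left
  have h2U : (2:ℂ) ∈ U := by
    constructor
    · simp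
    · intro h
      rw [mem_singleton_iff] at h
      norm_num at h
  have heq : Set.EqOn g zk U := by
    refine AnalyticOnNhd.eqOn_of_preconnected_of_eventuallyEq
      (hg.analyticOnNhd hUopen) (hzk.analyticOnNhd hUopen) U_preconnected h2U ?_
    have hopen : IsOpen {z : ℂ | 1 < z.re} := isOpen_lt continuous_const Complex.continuous_re
    have hmem : (2:ℂ) ∈ {z : ℂ | 1 < z.re} := by simp
    filter_upwards [hopen.mem_nhds hmem] with z hz
    exact zeta_key_gt_one hz
  exact heq ⟨hw, hw1⟩

lemma conj_ofReal_cpow {x : ℝ} (hx : 0 < x) (w : ℂ) :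
    (starRingEnd ℂ) ((x:ℂ) ^ w) = (x:ℂ) ^ ((starRingEnd ℂ) w) := by
  rw [Complex.cpow_def_of_ne_zero (Complex.ofReal_ne_zero.2 hx.ne'),
    Complex.cpow_def_of_ne_zero (Complex.ofReal_ne_zero.2 hx.ne'),
    ← Complex.exp_conj, map_mul, ← Complex.ofReal_log hx.le, Complex.conj_ofReal]

/-- Schur-type step. -/
lemma schur_step (n : ℕ) (B : Fin n → Fin n → ℂ)
    (hB : ∀ c : Fin n → ℂ, 0 ≤ ∑ j, ∑ k, B j k * c j * (starRingEnd ℂ) (c k))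
    (f : Fin n → ℝ → ℂ)
    (hfi : ∀ j k, IntegrableOn (fun x => f j x * (starRingEnd ℂ) (f k x)) (Ioi (1:ℝ)))
    (c : Fin n → ℂ) :
    0 ≤ ∑ j, ∑ k, ((∫ x in Ioi (1:ℝ), f j x * (starRingEnd ℂ) (f k x)) * B j k)
        * c j * (starRingEnd ℂ) (c k) := by
  have hint : ∀ j k : Fin n, IntegrableOn
      (fun x => B j k * (c j * f j x) * (starRingEnd ℂ) (c k * f k x)) (Ioi (1:ℝ)) := by
    intro j k
    have : (fun x => B j k * (c j * f j x) * (starRingEnd ℂ) (c k * f k x))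
        = fun x => (B j k * c j * (starRingEnd ℂ) (c k)) * (f j x * (starRingEnd ℂ) (f k x)) := by
      funext x; simp only [map_mul]; ring
    rw [this]
    exact (hfi j k).const_mul _
  have hS : ∀ j k : Fin n, ((∫ x in Ioi (1:ℝ), f j x * (starRingEnd ℂ) (f k x)) * B j k)
        * c j * (starRingEnd ℂ) (c k)
      = ∫ x in Ioi (1:ℝ),
          B j k * (c j * f j x) * (starRingEnd ℂ) (c k * f k x) := by
    intro j k
    have : (fun x => B j k * (c j * f j x) * (starRingEnd ℂ) (c k * f k x))
        = fun x => (B j k * c j * (starRingEnd ℂ) (c k)) * (f j x * (starRingEnd ℂ) (f k x)) := by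
      funext x; simp only [map_mul]; ring
    rw [this, integral_const_mul]; ring
  simp only [hS]
  have h1 : ∀ j : Fin n, (∑ k, ∫ x in Ioi (1:ℝ),
        B j k * (c j * f j x) * (starRingEnd ℂ) (c k * f k x))
      = ∫ x in Ioi (1:ℝ), ∑ k, B j k * (c j * f j x) * (starRingEnd ℂ) (c k * f k x) :=
    fun j => (integral_finset_sum _ (fun k _ => hint j k)).symm
  simp only [h1]
  rw [← integral_finset_sum _ (fun j _ => integrable_finset_sum _ (fun k _ => hint j k))]
  set S := fun x : ℝ => ∑ j, ∑ k, B j k * (c j * f j x) * (starRingEnd ℂ) (c k * f k x) with hSdef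
  have hpt : ∀ x : ℝ, 0 ≤ S x := fun x => hB (fun j => c j * f j x)
  have hSeq : ∀ x : ℝ, S x = ((S x).re : ℂ) := by
    intro x
    have h := Complex.nonneg_iff.1 (hpt x)
    exact Complex.ext rfl (by simp [← h.2])
  calc (0:ℂ) ≤ ((∫ x in Ioi (1:ℝ), (S x).re) : ℝ) := by
        rw [Complex.zero_le_real]
        exact setIntegral_nonneg measurableSet_Ioi fun x _ => (Complex.nonneg_iff.1 (hpt x)).1
    _ = ∫ x in Ioi (1:ℝ), S x := by
        rw [show (∫ x in Ioi (1:ℝ), S x) = ∫ x in Ioi (1:ℝ), ((S x).re : ℂ) from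
          setIntegral_congr_fun measurableSet_Ioi fun x _ => hSeq x]
        exact (integral_ofReal (𝕜 := ℂ)).symm

lemma prod_psd (m n : ℕ) (f : Fin m → Fin n → ℝ → ℂ)
    (hfi : ∀ l j k, IntegrableOn (fun x => f l j x * (starRingEnd ℂ) (f l k x)) (Ioi (1:ℝ)))
    (T : Finset (Fin m)) (c : Fin n → ℂ) :
    0 ≤ ∑ j, ∑ k, (∏ l ∈ T, ∫ x in Ioi (1:ℝ), f l j x * (starRingEnd ℂ) (f l k x))
        * c j * (starRingEnd ℂ) (c k) := by
  induction T using Finset.induction_on generalizing c with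
  | empty =>
      simp only [Finset.prod_empty, one_mul]
      have : ∑ j, ∑ k, c j * (starRingEnd ℂ) (c k)
          = (∑ j, c j) * (starRingEnd ℂ) (∑ k, c k) := by
        rw [map_sum, Finset.sum_mul_sum]
      rw [this, Complex.mul_conj]
      exact Complex.zero_le_real.2 (Complex.normSq_nonneg _)
  | @insert a T ha ih =>
      simp only [Finset.prod_insert ha]
      have := schur_step n (fun j k => ∏ l ∈ T, ∫ x in Ioi (1:ℝ),
          f l j x * (starRingEnd ℂ) (f l k x))
        (fun c => ih c) (f a) (hfi a) c
      simpa [mul_assoc] using this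

lemma pointwise_gram (sj sk : ℂ) {x : ℝ} (hx : x ∈ Ioi (1:ℝ)) :
    (((Real.sqrt (Int.fract x / x) : ℝ) : ℂ) * (x:ℂ) ^ (-sj))
      * (starRingEnd ℂ) (((Real.sqrt (Int.fract x / x) : ℝ) : ℂ) * (x:ℂ) ^ (-sk))
    = zkf (sj + (starRingEnd ℂ) sk) x := by
  have hx0 : (0:ℝ) < x := lt_trans one_pos hx
  have hxne : (x:ℂ) ≠ 0 := Complex.ofReal_ne_zero.2 hx0.ne'
  rw [map_mul, Complex.conj_ofReal, conj_ofReal_cpow hx0, map_neg]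
  have h1 : ((Real.sqrt (Int.fract x / x) : ℝ) : ℂ) * ((Real.sqrt (Int.fract x / x) : ℝ) : ℂ)
      = ((Int.fract x / x : ℝ) : ℂ) := by
    rw [← Complex.ofReal_mul, Real.mul_self_sqrt (div_nonneg (Int.fract_nonneg x) hx0.le)]
  have h2 : (x:ℂ) ^ (-sj) * (x:ℂ) ^ (-((starRingEnd ℂ) sk))
      = (x:ℂ) ^ (-(sj + (starRingEnd ℂ) sk)) := by
    rw [← Complex.cpow_add _ _ hxne]; ring_nf
  have h3 : (x:ℂ) ^ (-(sj + (starRingEnd ℂ) sk) - 1)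
      = (x:ℂ) ^ (-(sj + (starRingEnd ℂ) sk)) * ((x:ℂ))⁻¹ := by
    rw [sub_eq_add_neg, Complex.cpow_add _ _ hxne, Complex.cpow_neg_one]
  unfold zkf
  rw [h3]
  calc ((Real.sqrt (Int.fract x / x) : ℝ) : ℂ) * (x:ℂ) ^ (-sj)
        * (((Real.sqrt (Int.fract x / x) : ℝ) : ℂ) * (x:ℂ) ^ (-((starRingEnd ℂ) sk)))
      = (((Real.sqrt (Int.fract x / x) : ℝ) : ℂ) * ((Real.sqrt (Int.fract x / x) : ℝ) : ℂ))
        * ((x:ℂ) ^ (-sj) * (x:ℂ) ^ (-((starRingEnd ℂ) sk))) := by ring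
    _ = ((Int.fract x / x : ℝ) : ℂ) * (x:ℂ) ^ (-(sj + (starRingEnd ℂ) sk)) := by rw [h1, h2]
    _ = ((Int.fract x : ℝ) : ℂ) * ((x:ℂ) ^ (-(sj + (starRingEnd ℂ) sk)) * ((x:ℂ))⁻¹) := by
        rw [Complex.ofReal_div]; ring

/-- For `s_{j,ℓ} ∈ ℂ` with `Re(s_{j,ℓ}) > 0` and `s_{j,ℓ} + conj s_{k,ℓ} ≠ 1`,
the matrix with `(j,k)` entry
`∏_{ℓ=1}^m (1/(s_{j,ℓ} + conj s_{k,ℓ} - 1) - ζ(s_{j,ℓ} + conj s_{k,ℓ})/(s_{j,ℓ} + conj s_{k,ℓ}))`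
is positive semidefinite. -/
theorem zeta_product_matrix_posSemidef (m n : ℕ) (s : Fin n → Fin m → ℂ)
    (hs : ∀ j l, 0 < (s j l).re)
    (hne : ∀ j k l, s j l + (starRingEnd ℂ) (s k l) ≠ 1) :
    ∀ c : Fin n → ℂ,
      0 ≤ ∑ j : Fin n, ∑ k : Fin n,
        (∏ l : Fin m,
            (1 / (s j l + (starRingEnd ℂ) (s k l) - 1)
              - riemannZeta (s j l + (starRingEnd ℂ) (s k l)) / (s j l + (starRingEnd ℂ) (s k l))))
          * c j * (starRingEnd ℂ) (c k) := by
  intro c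
  set f : Fin m → Fin n → ℝ → ℂ :=
    fun l j x => ((Real.sqrt (Int.fract x / x) : ℝ) : ℂ) * (x:ℂ) ^ (-(s j l)) with hf
  have hwre : ∀ j k l, 0 < (s j l + (starRingEnd ℂ) (s k l)).re := by
    intro j k l
    rw [Complex.add_re, Complex.conj_re]
    exact add_pos (hs j l) (hs k l)
  have hfi : ∀ l j k,
      IntegrableOn (fun x => f l j x * (starRingEnd ℂ) (f l k x)) (Ioi (1:ℝ)) := by
    intro l j k
    exact (zkf_integrable (hwre j k l)).congr_fun
      (fun x hx => (pointwise_gram (s j l) (s k l) hx).symm) measurableSet_Ioi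
  have hent : ∀ j k : Fin n,
      (∏ l : Fin m,
        (1 / (s j l + (starRingEnd ℂ) (s k l) - 1)
          - riemannZeta (s j l + (starRingEnd ℂ) (s k l)) / (s j l + (starRingEnd ℂ) (s k l))))
      = ∏ l : Fin m, ∫ x in Ioi (1:ℝ), f l j x * (starRingEnd ℂ) (f l k x) := by
    intro j k
    refine Finset.prod_congr rfl fun l _ => ?_
    rw [zeta_key (hwre j k l) (hne j k l)]
    exact (setIntegral_congr_fun measurableSet_Ioi
      (fun x hx => (pointwise_gram (s j l) (s k l) hx))).symm
  calc (0:ℂ) ≤ ∑ j, ∑ k, (∏ l ∈ Finset.univ, ∫ x in Ioi (1:ℝ),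
          f l j x * (starRingEnd ℂ) (f l k x)) * c j * (starRingEnd ℂ) (c k) :=
        prod_psd m n f hfi Finset.univ c
    _ = _ := by
        refine Finset.sum_congr rfl fun j _ => Finset.sum_congr rfl fun k _ => ?_
        rw [hent j k]
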